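/- arXiv:2103.15870 — 2 statements merged into one kernel-verified Lean document; each statement's English description precedes it below -/
import Mathlib

section
/- Let G be the digraph on V = {v_0,…,v_5} with edges (v_0,v_1),(v_0,v_2),(v_1,v_3),(v_1,v_4),(v_2,v_3),(v_2,v_4),(v_5,v_3),(v_5,v_4), let f : V → ℝ with f(v_1) ≠ 0 or f(v_2) ≠ 0, and let α = Σ_v f(v) ∂/∂v. Then Ω_2(G,α,0;ℝ) = Span{f(v_2)v_0v_1v_3 − f(v_1)v_0v_2v_3, f(v_2)v_0v_1v_4 − f(v_1)v_0v_2v_4} is 2-dimensional. -/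
open Finsupp

/-- The `f`-weighted boundary operator `∂^f(v_0…v_n) = Σ_i (−1)^i f(v_i) v_0…v̂_i…v_n`. -/
noncomputable def weightedD {V : Type*} (R : Type*) [CommRing R] (f : V → R) :
    (List V →₀ R) →ₗ[R] (List V →₀ R) :=
  Finsupp.lift (List V →₀ R) R (List V) fun l =>
    ∑ i : Fin l.length, ((-1 : R) ^ (i : ℕ) * f (l.get i)) •
      Finsupp.single (l.eraseIdx i) (1 : R)

/-- `A_m(G;R)` (`ℤ`-indexed, `⊥` for `m < 0`): the span of allowed elementary
`m`-paths (lists with `m+1` vertices following the edge relation `E`). -/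
noncomputable def allowedSub (R : Type*) {V : Type*} [CommRing R] (E : V → V → Prop)
    (m : ℤ) : Submodule R (List V →₀ R) :=
  Submodule.span R
    {x | ∃ l : List V, l.Chain' E ∧ (l.length : ℤ) = m + 1 ∧ x = Finsupp.single l 1}

/-- `Ω_m(G,α;R) = A_m(G;R) ∩ α⁻¹(A_{m−k}(G;R))` for a degree-`k` operator `α`. -/
noncomputable def omegaSub (R : Type*) {V : Type*} [CommRing R] (E : V → V → Prop)
    (α : (List V →₀ R) →ₗ[R] (List V →₀ R)) (k : ℕ) (m : ℤ) :
    Submodule R (List V →₀ R) :=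
  allowedSub R E m ⊓ (allowedSub R E (m - k)).comap α

set_option maxRecDepth 8000

lemma weightedD_single3 (f : Fin 6 → ℝ) (a b c : Fin 6) :
    weightedD ℝ f (Finsupp.single [a,b,c] 1) =
      f a • Finsupp.single [b,c] 1 - f b • Finsupp.single [a,c] 1 + f c • Finsupp.single [a,b] 1 := by
  simp [weightedD, Fin.sum_univ_three, List.eraseIdx]
  ext l
  simp only [Finsupp.add_apply, Finsupp.sub_apply, Finsupp.neg_apply, Finsupp.mul_apply,
    Finsupp.smul_apply, Finsupp.single_apply, smul_eq_mul]
  split_ifs <;> ring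

section main
variable (E : Fin 6 → Fin 6 → Prop)
    (hE : ∀ i j, E i j ↔ (i, j) ∈ ([(0, 1), (0, 2), (1, 3), (1, 4), (2, 3), (2, 4),
      (5, 3), (5, 4)] : List (Fin 6 × Fin 6)))

include hE

lemma allowed2_set :
    {x : List (Fin 6) →₀ ℝ | ∃ l : List (Fin 6), l.Chain' E ∧ (l.length : ℤ) = 2 + 1 ∧
        x = Finsupp.single l 1} =
      {Finsupp.single [0,1,3] 1, Finsupp.single [0,1,4] 1,
       Finsupp.single [0,2,3] 1, Finsupp.single [0,2,4] 1} := by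
  ext x
  constructor
  · rintro ⟨l, hc, hl, rfl⟩
    have hl3 : l.length = 3 := by exact_mod_cast hl
    rcases l with _ | ⟨a, _ | ⟨b, _ | ⟨c, _ | ⟨d, l⟩⟩⟩⟩ <;> simp_all [List.Chain']
    obtain ⟨h1, h2⟩ := hc
    rcases h1 with ⟨rfl,rfl⟩|⟨rfl,rfl⟩|⟨rfl,rfl⟩|⟨rfl,rfl⟩|⟨rfl,rfl⟩|⟨rfl,rfl⟩|⟨rfl,rfl⟩|⟨rfl,rfl⟩ <;>
      rcases h2 with ⟨h,rfl⟩|⟨h,rfl⟩|⟨h,rfl⟩|⟨h,rfl⟩|⟨h,rfl⟩|⟨h,rfl⟩|⟨h,rfl⟩|⟨h,rfl⟩ <;>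
      simp_all (config := { decide := true })
  · intro hx
    rcases hx with rfl | rfl | rfl | rfl <;>
    · refine ⟨_, ?_, by simp, rfl⟩
      simp [List.Chain', List.isChain_cons_cons, hE]

lemma mem_allowed1 (x y : Fin 6) (h : E x y) :
    Finsupp.single [x, y] (1:ℝ) ∈ allowedSub ℝ E 1 :=
  Submodule.subset_span ⟨[x,y], by simp [List.Chain', List.isChain_cons_cons, h], by simp, rfl⟩

lemma allowed1_apply_eq_zero (L : List (Fin 6)) (hL : ∀ x y : Fin 6, L = [x,y] → ¬ E x y)
    {v : List (Fin 6) →₀ ℝ} (hv : v ∈ allowedSub ℝ E 1) : v L = 0 := by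
  have : allowedSub ℝ E 1 ≤ LinearMap.ker (Finsupp.lapply (M := ℝ) L) := by
    rw [allowedSub, Submodule.span_le]
    rintro x ⟨l, hc, hl, rfl⟩
    have hl2 : l.length = 2 := by exact_mod_cast hl
    rcases l with _ | ⟨a, _ | ⟨b, _ | ⟨c, l⟩⟩⟩ <;>
      [skip; skip; skip; skip] <;> first
      | (simp only [List.Chain', List.isChain_cons_cons, List.isChain_singleton, and_true] at hc
         simp only [SetLike.mem_coe, LinearMap.mem_ker, Finsupp.lapply_apply, Finsupp.single_apply]
         rw [if_neg]
         rintro rfl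
         exact hL a b rfl hc)
      | (exfalso; simp at hl2)
  simpa using this hv

end main

section thm
variable (E : Fin 6 → Fin 6 → Prop)
    (hE : ∀ i j, E i j ↔ (i, j) ∈ ([(0, 1), (0, 2), (1, 3), (1, 4), (2, 3), (2, 4),
      (5, 3), (5, 4)] : List (Fin 6 × Fin 6)))
include hE

lemma mem_allowed2 (a b c : Fin 6) (h1 : E a b) (h2 : E b c) :
    Finsupp.single [a, b, c] (1:ℝ) ∈ allowedSub ℝ E 2 :=
  Submodule.subset_span ⟨[a,b,c], by simp [List.Chain', List.isChain_cons_cons, h1, h2], by simp, rfl⟩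

lemma omega2_span_aux (f : Fin 6 → ℝ) (hf : f 1 ≠ 0 ∨ f 2 ≠ 0) :
    omegaSub ℝ E (weightedD ℝ f) 1 2 = Submodule.span ℝ
      {f 2 • Finsupp.single [(0 : Fin 6), 1, 3] (1 : ℝ) - f 1 • Finsupp.single [0, 2, 3] 1,
       f 2 • Finsupp.single [(0 : Fin 6), 1, 4] (1 : ℝ) - f 1 • Finsupp.single [0, 2, 4] 1} := by
  have hE01 : E 0 1 := (hE 0 1).mpr (by decide)
  have hE02 : E 0 2 := (hE 0 2).mpr (by decide)
  have hE13 : E 1 3 := (hE 1 3).mpr (by decide)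
  have hE14 : E 1 4 := (hE 1 4).mpr (by decide)
  have hE23 : E 2 3 := (hE 2 3).mpr (by decide)
  have hE24 : E 2 4 := (hE 2 4).mpr (by decide)
  have hdeg : ((2 : ℤ) - ((1:ℕ) : ℤ)) = 1 := by norm_num
  set s1 : List (Fin 6) →₀ ℝ := Finsupp.single [0,1,3] 1 with hs1
  set s2 : List (Fin 6) →₀ ℝ := Finsupp.single [0,1,4] 1 with hs2
  set s3 : List (Fin 6) →₀ ℝ := Finsupp.single [0,2,3] 1 with hs3
  set s4 : List (Fin 6) →₀ ℝ := Finsupp.single [0,2,4] 1 with hs4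
  apply le_antisymm
  · intro x hx
    rw [omegaSub, Submodule.mem_inf] at hx
    obtain ⟨hxA, hxα⟩ := hx
    rw [allowedSub, allowed2_set E hE] at hxA
    rw [Submodule.mem_span_insert] at hxA
    obtain ⟨p, x1, hx1, rfl⟩ := hxA
    rw [Submodule.mem_span_insert] at hx1
    obtain ⟨q, x2, hx2, rfl⟩ := hx1
    rw [Submodule.mem_span_insert] at hx2
    obtain ⟨r, x3, hx3, rfl⟩ := hx2
    rw [Submodule.mem_span_singleton] at hx3
    obtain ⟨s, rfl⟩ := hx3
    rw [Submodule.mem_comap, hdeg] at hxα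
    have h03 := allowed1_apply_eq_zero E hE [0,3]
      (by rintro u v h hEuv
          obtain ⟨rfl, rfl⟩ : (0 : Fin 6) = u ∧ (3 : Fin 6) = v := by simpa using h
          rw [hE] at hEuv; revert hEuv; decide) hxα
    have h04 := allowed1_apply_eq_zero E hE [0,4]
      (by rintro u v h hEuv
          obtain ⟨rfl, rfl⟩ : (0 : Fin 6) = u ∧ (4 : Fin 6) = v := by simpa using h
          rw [hE] at hEuv; revert hEuv; decide) hxα
    rw [map_add, map_add, map_add, map_smul, map_smul, map_smul, map_smul,
      weightedD_single3 f 0 1 3, weightedD_single3 f 0 1 4, weightedD_single3 f 0 2 3,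
      weightedD_single3 f 0 2 4] at h03 h04
    simp (config := { decide := true }) [Finsupp.single_apply] at h03 h04
    rcases hf with hf1 | hf2
    · rw [← Submodule.smul_mem_iff _ hf1]
      have heq : f 1 • ((p • Finsupp.single ([0,1,3] : List (Fin 6)) (1:ℝ)) +
          ((q • Finsupp.single [0,1,4] 1) + ((r • Finsupp.single [0,2,3] 1) +
            s • Finsupp.single [0,2,4] 1))) =
          (-r) • (f 2 • s1 - f 1 • s3) + (-s) • (f 2 • s2 - f 1 • s4) := by
        rw [hs1, hs2, hs3, hs4]
        match_scalars <;> linarith [h03, h04]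
      rw [heq]
      exact Submodule.add_mem _
        (Submodule.smul_mem _ _ (Submodule.subset_span (Set.mem_insert _ _)))
        (Submodule.smul_mem _ _ (Submodule.subset_span (Set.mem_insert_of_mem _ rfl)))
    · rw [← Submodule.smul_mem_iff _ hf2]
      have heq : f 2 • ((p • Finsupp.single ([0,1,3] : List (Fin 6)) (1:ℝ)) +
          ((q • Finsupp.single [0,1,4] 1) + ((r • Finsupp.single [0,2,3] 1) +
            s • Finsupp.single [0,2,4] 1))) =
          p • (f 2 • s1 - f 1 • s3) + q • (f 2 • s2 - f 1 • s4) := by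
        rw [hs1, hs2, hs3, hs4]
        match_scalars <;> linarith [h03, h04]
      rw [heq]
      exact Submodule.add_mem _
        (Submodule.smul_mem _ _ (Submodule.subset_span (Set.mem_insert _ _)))
        (Submodule.smul_mem _ _ (Submodule.subset_span (Set.mem_insert_of_mem _ rfl)))
  · rw [Submodule.span_le]
    rintro x (rfl | rfl) <;>
      (simp only [SetLike.mem_coe]; rw [omegaSub, Submodule.mem_inf]; refine ⟨?_, ?_⟩)
    · exact Submodule.sub_mem _ (Submodule.smul_mem _ _ (mem_allowed2 E hE 0 1 3 hE01 hE13))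
        (Submodule.smul_mem _ _ (mem_allowed2 E hE 0 2 3 hE02 hE23))
    · rw [Submodule.mem_comap, hdeg]
      have : weightedD ℝ f (f 2 • s1 - f 1 • s3) =
          (f 2 * f 0) • Finsupp.single [1,3] 1 + (f 2 * f 3) • Finsupp.single [0,1] 1 +
          (-(f 1 * f 0)) • Finsupp.single [2,3] 1 + (-(f 1 * f 3)) • Finsupp.single [0,2] 1 := by
        rw [map_sub, map_smul, map_smul, hs1, hs3, weightedD_single3, weightedD_single3]
        module
      rw [this]
      exact Submodule.add_mem _ (Submodule.add_mem _ (Submodule.add_mem _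
        (Submodule.smul_mem _ _ (mem_allowed1 E hE 1 3 hE13))
        (Submodule.smul_mem _ _ (mem_allowed1 E hE 0 1 hE01)))
        (Submodule.smul_mem _ _ (mem_allowed1 E hE 2 3 hE23)))
        (Submodule.smul_mem _ _ (mem_allowed1 E hE 0 2 hE02))
    · exact Submodule.sub_mem _ (Submodule.smul_mem _ _ (mem_allowed2 E hE 0 1 4 hE01 hE14))
        (Submodule.smul_mem _ _ (mem_allowed2 E hE 0 2 4 hE02 hE24))
    · rw [Submodule.mem_comap, hdeg]
      have : weightedD ℝ f (f 2 • s2 - f 1 • s4) =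
          (f 2 * f 0) • Finsupp.single [1,4] 1 + (f 2 * f 4) • Finsupp.single [0,1] 1 +
          (-(f 1 * f 0)) • Finsupp.single [2,4] 1 + (-(f 1 * f 4)) • Finsupp.single [0,2] 1 := by
        rw [map_sub, map_smul, map_smul, hs2, hs4, weightedD_single3, weightedD_single3]
        module
      rw [this]
      exact Submodule.add_mem _ (Submodule.add_mem _ (Submodule.add_mem _
        (Submodule.smul_mem _ _ (mem_allowed1 E hE 1 4 hE14))
        (Submodule.smul_mem _ _ (mem_allowed1 E hE 0 1 hE01)))
        (Submodule.smul_mem _ _ (mem_allowed1 E hE 2 4 hE24)))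
        (Submodule.smul_mem _ _ (mem_allowed1 E hE 0 2 hE02))

end thm

/-- for the digraph on `{v_0,…,v_5}`, a weight `f` with `f(v_1) ≠ 0` or
`f(v_2) ≠ 0`, and `α = Σ_v f(v) ∂/∂v`, the space `Ω_2(G,α,0;ℝ)` is spanned by
`f(v_2)v_0v_1v_3 − f(v_1)v_0v_2v_3` and `f(v_2)v_0v_1v_4 − f(v_1)v_0v_2v_4`
and is `2`-dimensional. -/
theorem omega2_span
    (E : Fin 6 → Fin 6 → Prop)
    (hE : ∀ i j, E i j ↔ (i, j) ∈ ([(0, 1), (0, 2), (1, 3), (1, 4), (2, 3), (2, 4),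
      (5, 3), (5, 4)] : List (Fin 6 × Fin 6)))
    (f : Fin 6 → ℝ) (hf : f 1 ≠ 0 ∨ f 2 ≠ 0) :
    omegaSub ℝ E (weightedD ℝ f) 1 2 = Submodule.span ℝ
      {f 2 • Finsupp.single [(0 : Fin 6), 1, 3] (1 : ℝ) - f 1 • Finsupp.single [0, 2, 3] 1,
       f 2 • Finsupp.single [(0 : Fin 6), 1, 4] (1 : ℝ) - f 1 • Finsupp.single [0, 2, 4] 1} ∧
    Module.finrank ℝ (omegaSub ℝ E (weightedD ℝ f) 1 2) = 2 := by
  refine ⟨omega2_span_aux E hE f hf, ?_⟩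
  rw [omega2_span_aux E hE f hf]
  set g1 : List (Fin 6) →₀ ℝ :=
    f 2 • Finsupp.single [0, 1, 3] 1 - f 1 • Finsupp.single [0, 2, 3] 1 with hg1
  set g2 : List (Fin 6) →₀ ℝ :=
    f 2 • Finsupp.single [0, 1, 4] 1 - f 1 • Finsupp.single [0, 2, 4] 1 with hg2
  have li : LinearIndependent ℝ ![g1, g2] := by
    rw [LinearIndependent.pair_iff]
    intro a b hab
    have e1 := congrArg (fun y : List (Fin 6) →₀ ℝ => y [0,1,3]) hab
    have e2 := congrArg (fun y : List (Fin 6) →₀ ℝ => y [0,2,3]) hab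
    have e3 := congrArg (fun y : List (Fin 6) →₀ ℝ => y [0,1,4]) hab
    have e4 := congrArg (fun y : List (Fin 6) →₀ ℝ => y [0,2,4]) hab
    simp (config := { decide := true }) [hg1, hg2, Finsupp.single_apply] at e1 e2 e3 e4
    constructor <;> rcases hf with hf1 | hf2
    · exact e2.resolve_right hf1
    · exact e1.resolve_right hf2
    · exact e4.resolve_right hf1
    · exact e3.resolve_right hf2
  have hrange : ({g1, g2} : Set (List (Fin 6) →₀ ℝ)) = Set.range ![g1, g2] := by
    ext z
    simp [Fin.exists_fin_two, eq_comm, or_comm]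
  rw [hrange, finrank_span_eq_card li, Fintype.card_fin]
end

section
/- In the setting of the previous statement with f(v_1) ≠ 0 or f(v_2) ≠ 0 and additionally f(v_0) ≠ 0, the images α(f(v_2)v_0v_1v_3 − f(v_1)v_0v_2v_3) and α(f(v_2)v_0v_1v_4 − f(v_1)v_0v_2v_4) are linearly independent in A_1(G;ℝ), hence dim H_2(G,α,0;ℝ) = 0. -/
open Finsupp

/-- `∂^f` on a 3-vertex path. -/
lemma wD_single3 (f : Fin 6 → ℝ) (a b c : Fin 6) :
    weightedD ℝ f (Finsupp.single [a,b,c] (1:ℝ)) =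
      f a • Finsupp.single [b,c] 1 - f b • Finsupp.single [a,c] 1
        + f c • Finsupp.single [a,b] 1 := by
  rw [weightedD, Finsupp.lift_apply, Finsupp.sum_single_index (by simp)]
  rw [one_smul]
  rw [show (∑ i : Fin [a,b,c].length, ((-1:ℝ)^(i:ℕ) * f ([a,b,c].get i)) •
      Finsupp.single ([a,b,c].eraseIdx i) (1:ℝ)) =
    ∑ i : Fin 3, ((-1:ℝ)^(i:ℕ) * f ([a,b,c].get i)) •
      Finsupp.single ([a,b,c].eraseIdx i) (1:ℝ) from rfl, Fin.sum_univ_three]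
  norm_num [List.eraseIdx]
  module

/-- if moreover `f(v_0) ≠ 0`, the `α`-images of the two generators of
`Ω_2(G,α,0;ℝ)` are linearly independent, hence `dim H_2(G,α,0;ℝ) = 0`
(since `A_3(G;ℝ) = 0`, `H_2 = Ker(α|Ω_2)`). -/
theorem h2_zero
    (E : Fin 6 → Fin 6 → Prop)
    (hE : ∀ i j, E i j ↔ (i, j) ∈ ([(0, 1), (0, 2), (1, 3), (1, 4), (2, 3), (2, 4),
      (5, 3), (5, 4)] : List (Fin 6 × Fin 6)))
    (f : Fin 6 → ℝ) (hf : f 1 ≠ 0 ∨ f 2 ≠ 0) (hf0 : f 0 ≠ 0) :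
    LinearIndependent ℝ
      ![weightedD ℝ f (f 2 • Finsupp.single [(0 : Fin 6), 1, 3] (1 : ℝ) -
          f 1 • Finsupp.single [0, 2, 3] 1),
        weightedD ℝ f (f 2 • Finsupp.single [(0 : Fin 6), 1, 4] (1 : ℝ) -
          f 1 • Finsupp.single [0, 2, 4] 1)] ∧
    Module.finrank ℝ ↥(omegaSub ℝ E (weightedD ℝ f) 1 2 ⊓ LinearMap.ker (weightedD ℝ f)) = 0 := by
  constructor
  · rw [LinearIndependent.pair_iff]
    intro s t hst
    rw [map_sub, map_sub, map_smul, map_smul, map_smul, map_smul,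
      wD_single3, wD_single3, wD_single3, wD_single3] at hst
    have h13 := DFunLike.congr_fun hst [1,3]
    have h23 := DFunLike.congr_fun hst [2,3]
    have h14 := DFunLike.congr_fun hst [1,4]
    have h24 := DFunLike.congr_fun hst [2,4]
    simp [Finsupp.single_apply] at h13 h23 h14 h24
    constructor
    · rcases hf with h | h
      · tauto
      · tauto
    · rcases hf with h | h
      · tauto
      · tauto
  · set v : Fin 4 → (List (Fin 6) →₀ ℝ) :=
      ![Finsupp.single [0,1,3] 1, Finsupp.single [0,1,4] 1,
        Finsupp.single [0,2,3] 1, Finsupp.single [0,2,4] 1] with hv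
    have hA : allowedSub ℝ E 2 ≤ Submodule.span ℝ (Set.range v) := by
      rw [allowedSub, Submodule.span_le]
      rintro x ⟨l, hc, hlen, rfl⟩
      have hl3 : l.length = 3 := by exact_mod_cast hlen
      obtain ⟨a, b, c, rfl⟩ := List.length_eq_three.mp hl3
      simp only [List.Chain', List.isChain_cons_cons, List.isChain_singleton, and_true] at hc
      obtain ⟨h1, h2⟩ := hc
      rw [hE] at h1; rw [hE] at h2
      have key : ∀ a b c : Fin 6,
          (a,b) ∈ ([(0, 1), (0, 2), (1, 3), (1, 4), (2, 3), (2, 4),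
            (5, 3), (5, 4)] : List (Fin 6 × Fin 6)) →
          (b,c) ∈ ([(0, 1), (0, 2), (1, 3), (1, 4), (2, 3), (2, 4),
            (5, 3), (5, 4)] : List (Fin 6 × Fin 6)) →
          [a,b,c] = [0,1,3] ∨ [a,b,c] = [0,1,4] ∨ [a,b,c] = [0,2,3] ∨ [a,b,c] = [0,2,4] := by
        decide
      apply Submodule.subset_span
      rcases key a b c h1 h2 with h | h | h | h <;> rw [h]
      exacts [⟨0, rfl⟩, ⟨1, rfl⟩, ⟨2, rfl⟩, ⟨3, rfl⟩]
    have hbot : omegaSub ℝ E (weightedD ℝ f) 1 2 ⊓ LinearMap.ker (weightedD ℝ f) = ⊥ := by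
      rw [eq_bot_iff]
      rintro x ⟨⟨hxA, -⟩, hxk⟩
      have hxk : weightedD ℝ f x = 0 := hxk
      have hx := hA hxA
      rw [Submodule.mem_span_range_iff_exists_fun ℝ] at hx
      obtain ⟨cc, rfl⟩ := hx
      rw [Fin.sum_univ_four] at hxk ⊢
      simp only [hv, Matrix.cons_val_zero, Matrix.cons_val_one, Matrix.head_cons,
        Matrix.cons_val_two, Matrix.tail_cons, Matrix.cons_val_three] at hxk ⊢
      rw [map_add, map_add, map_add, map_smul, map_smul, map_smul, map_smul,
        wD_single3, wD_single3, wD_single3, wD_single3] at hxk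
      have h13 := DFunLike.congr_fun hxk [1,3]
      have h14 := DFunLike.congr_fun hxk [1,4]
      have h23 := DFunLike.congr_fun hxk [2,3]
      have h24 := DFunLike.congr_fun hxk [2,4]
      simp [Finsupp.single_apply, hf0] at h13 h14 h23 h24
      simp [Submodule.mem_bot, h13, h14, h23, h24]
    rw [hbot]
    exact finrank_bot ℝ _
end
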